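/- Consider the 3×3 unit grid G = {0,1,2} × {0,1,2} ⊂ ℝ² with faulty nodes f₁ = (0,0) and f₂ = (0,1), and let C = G \ {f₁, f₂} be the set of correct nodes. Let c, T_r, R_min > 0 satisfy c·T_r = (9/4)·R_min (so that the transmission range r_t = √(c·T_r/R_min) equals 3/2). Then there exist a point k ∈ ℝ² with k ∉ G and dist(k, (1,1)) ≤ 3/2, and transmission strengths T₁, T₂ > 0, such that: (i) for every w ∈ C and every i ∈ {1,2}, either c·T_i/dist(f_i, w)² < R_min (w does not receive the i-th transmission) or c·T_i/dist(f_i, w)² = c·T_r/dist(k, w)² (w receives it with exactly the RSS of a transmission from k at strength T_r); and (ii) every w ∈ C with dist(k, w) ≤ 3/2 receives at least one of the two transmissions, i.e. c·T_i/dist(f_i, w)² ≥ R_min for some i ∈ {1,2}. In other words, k is a perfect snare for (1,1): the two faulty nodes can jointly simulate a fictitious node at k without generating any explicit or implicit conflict at the correct nodes. -/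

import Mathlib

/-- A point of the Euclidean plane with the given coordinates. -/
noncomputable def planePt (a b : ℝ) : EuclideanSpace ℝ (Fin 2) := WithLp.toLp 2 ![a, b]

/-- The 3×3 unit grid `{0,1,2} × {0,1,2}` as a subset of the Euclidean plane. -/
noncomputable def grid3 : Set (EuclideanSpace ℝ (Fin 2)) :=
  {p | ∃ a ∈ ({0, 1, 2} : Set ℝ), ∃ b ∈ ({0, 1, 2} : Set ℝ), p = planePt a b}

lemma planePt_dist_sq (a b a' b' : ℝ) :
    dist (planePt a b) (planePt a' b') ^ 2 = (a - a') ^ 2 + (b - b') ^ 2 := by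
  rw [EuclideanSpace.dist_eq, Real.sq_sqrt (by positivity)]
  simp [planePt, Fin.sum_univ_two, Real.dist_eq, sq_abs]

lemma planePt_inj {a b a' b' : ℝ} (h : planePt a b = planePt a' b') : a = a' ∧ b = b' := by
  constructor
  · have := congrArg (fun p => p 0) h; simpa [planePt] using this
  · have := congrArg (fun p => p 1) h; simpa [planePt] using this

/-- In the 3×3 unit grid with faulty nodes `f₁ = (0,0)` and `f₂ = (0,1)` and range
`r_t = √(c T_r / R_min) = 3/2` (i.e. `c T_r = (9/4) R_min`), there is a perfect snare
for `(1,1)`: a point `k ∉ G` with `dist k (1,1) ≤ 3/2` and strengths `T₁, T₂ > 0` such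
that (i) every correct node either does not receive the transmission of `f_i` at `T_i`
or receives it with exactly the RSS of a transmission from `k` at `T_r`, and (ii) every
correct node within distance `3/2` of `k` receives at least one of the two
transmissions. -/
theorem grid_two_faults_perfect_snare
    (c T_r R_min : ℝ) (hc : 0 < c) (hT : 0 < T_r) (hR : 0 < R_min)
    (hrange : c * T_r = (9 / 4) * R_min) :
    ∃ k : EuclideanSpace ℝ (Fin 2), k ∉ grid3 ∧ dist k (planePt 1 1) ≤ 3 / 2 ∧
      ∃ T₁ T₂ : ℝ, 0 < T₁ ∧ 0 < T₂ ∧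
        (∀ w ∈ grid3 \ {planePt 0 0, planePt 0 1},
          (c * T₁ / dist (planePt 0 0) w ^ 2 < R_min ∨
            c * T₁ / dist (planePt 0 0) w ^ 2 = c * T_r / dist k w ^ 2) ∧
          (c * T₂ / dist (planePt 0 1) w ^ 2 < R_min ∨
            c * T₂ / dist (planePt 0 1) w ^ 2 = c * T_r / dist k w ^ 2)) ∧
        (∀ w ∈ grid3 \ {planePt 0 0, planePt 0 1}, dist k w ≤ 3 / 2 →
          (R_min ≤ c * T₁ / dist (planePt 0 0) w ^ 2 ∨
            R_min ≤ c * T₂ / dist (planePt 0 1) w ^ 2)) := by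
  refine ⟨planePt (-(1/4)) (3/4), ?_, ?_, 8 * T_r / 17, 8 * T_r / 13,
    by positivity, by positivity, ?_, ?_⟩
  · rintro ⟨a, ha, b, hb, h⟩
    obtain ⟨h1, h2⟩ := planePt_inj h
    simp only [Set.mem_insert_iff, Set.mem_singleton_iff] at ha
    rcases ha with rfl | rfl | rfl <;> norm_num at h1
  · have hd := planePt_dist_sq (-(1/4)) (3/4) 1 1
    nlinarith [dist_nonneg (x := planePt (-(1/4)) (3/4)) (y := planePt 1 1)]
  · rintro w ⟨⟨a, ha, b, hb, rfl⟩, hw2⟩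
    simp only [Set.mem_insert_iff, Set.mem_singleton_iff] at ha hb
    rcases ha with rfl | rfl | rfl <;> rcases hb with rfl | rfl | rfl
    · exact absurd (by simp) hw2
    · exact absurd (by simp) hw2
    · -- (0,2)
      constructor
      · left; rw [planePt_dist_sq]; norm_num; nlinarith [hrange, hR]
      · right; rw [planePt_dist_sq, planePt_dist_sq]; norm_num; ring
    · -- (1,0)
      constructor
      · right; rw [planePt_dist_sq, planePt_dist_sq]; norm_num; ring
      · left; rw [planePt_dist_sq]; norm_num; nlinarith [hrange, hR]
    · -- (1,1)
      constructor
      · left; rw [planePt_dist_sq]; norm_num; nlinarith [hrange, hR]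
      · right; rw [planePt_dist_sq, planePt_dist_sq]; norm_num; ring
    · -- (1,2)
      constructor <;> [left; left] <;> rw [planePt_dist_sq] <;> norm_num <;>
        nlinarith [hrange, hR]
    · -- (2,0)
      constructor <;> [left; left] <;> rw [planePt_dist_sq] <;> norm_num <;>
        nlinarith [hrange, hR]
    · -- (2,1)
      constructor <;> [left; left] <;> rw [planePt_dist_sq] <;> norm_num <;>
        nlinarith [hrange, hR]
    · -- (2,2)
      constructor <;> [left; left] <;> rw [planePt_dist_sq] <;> norm_num <;>
        nlinarith [hrange, hR]
  · rintro w ⟨⟨a, ha, b, hb, rfl⟩, hw2⟩ hle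
    simp only [Set.mem_insert_iff, Set.mem_singleton_iff] at ha hb
    rcases ha with rfl | rfl | rfl <;> rcases hb with rfl | rfl | rfl
    · exact absurd (by simp) hw2
    · exact absurd (by simp) hw2
    · -- (0,2) : receives f₂
      right; rw [planePt_dist_sq]; norm_num; nlinarith [hrange, hR]
    · -- (1,0) : receives f₁
      left; rw [planePt_dist_sq]; norm_num; nlinarith [hrange, hR]
    · -- (1,1) : receives f₂
      right; rw [planePt_dist_sq]; norm_num; nlinarith [hrange, hR]
    all_goals
      exfalso
      first
      | (nlinarith [planePt_dist_sq (-(1/4)) (3/4) 1 2,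
          dist_nonneg (x := planePt (-(1/4)) (3/4)) (y := planePt 1 2), hle])
      | (nlinarith [planePt_dist_sq (-(1/4)) (3/4) 2 0,
          dist_nonneg (x := planePt (-(1/4)) (3/4)) (y := planePt 2 0), hle])
      | (nlinarith [planePt_dist_sq (-(1/4)) (3/4) 2 1,
          dist_nonneg (x := planePt (-(1/4)) (3/4)) (y := planePt 2 1), hle])
      | (nlinarith [planePt_dist_sq (-(1/4)) (3/4) 2 2,
          dist_nonneg (x := planePt (-(1/4)) (3/4)) (y := planePt 2 2), hle])
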